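/- arXiv:1905.07509 — 3 statements merged into one kernel-verified Lean document; each statement's English description precedes it below -/
import Mathlib

section
/- For every odd n ≥ 1, the Φ-generalized powers are antisymmetric: X^(n)(x₀,x) = −X^(n)(x,x₀) and X̃^(n)(x₀,x) = −X̃^(n)(x,x₀). -/
noncomputable def genX (Φ : ℝ → ℂ) : ℕ → ℝ → ℝ → ℂ
  | 0 => fun _ _ => 1
  | n + 1 => fun x₀ x =>
      (n + 1 : ℕ) * ∫ ξ in x₀..x, genX Φ n x₀ ξ * Φ ξ ^ ((-1 : ℤ) ^ (n + 1))

noncomputable def genXt (Φ : ℝ → ℂ) : ℕ → ℝ → ℝ → ℂ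
  | 0 => fun _ _ => 1
  | n + 1 => fun x₀ x =>
      (n + 1 : ℕ) * ∫ ξ in x₀..x, genXt Φ n x₀ ξ * Φ ξ ^ (-((-1 : ℤ) ^ (n + 1)))
open MeasureTheory intervalIntegral Set

lemma contAux {G : ℝ → ℝ → ℂ} (hG : Continuous fun p : ℝ × ℝ => G p.1 p.2) :
    Continuous fun p : ℝ × ℝ => ∫ ξ in p.1..p.2, G p.1 ξ := by
  have hc : ∀ u : ℝ, Continuous fun ξ => G u ξ := fun u =>
    hG.comp (Continuous.prodMk_right u)
  have key : (fun p : ℝ × ℝ => ∫ ξ in p.1..p.2, G p.1 ξ) =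
      fun p => (∫ ξ in (0:ℝ)..p.2, G p.1 ξ) - ∫ ξ in (0:ℝ)..p.1, G p.1 ξ := by
    funext p
    rw [intervalIntegral.integral_interval_sub_left ((hc p.1).intervalIntegrable _ _)
      ((hc p.1).intervalIntegrable _ _)]
  rw [key]
  have hunc : Continuous (Function.uncurry fun (p : ℝ × ℝ) (ξ : ℝ) => G p.1 ξ) :=
    hG.comp ((continuous_fst.fst).prodMk continuous_snd)
  exact (continuous_parametric_intervalIntegral_of_continuous hunc continuous_snd).sub
    (continuous_parametric_intervalIntegral_of_continuous hunc continuous_fst)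

lemma contPhiZ {Φ : ℝ → ℂ} (hc : Continuous Φ) (h0 : ∀ y, Φ y ≠ 0) (e : ℤ) :
    Continuous fun y => Φ y ^ e := hc.zpow₀ e fun a => Or.inl (h0 a)

lemma genX_cont {Φ : ℝ → ℂ} (hc : Continuous Φ) (h0 : ∀ y, Φ y ≠ 0) :
    ∀ n, Continuous (fun p : ℝ × ℝ => genX Φ n p.1 p.2) ∧
      Continuous (fun p : ℝ × ℝ => genXt Φ n p.1 p.2) := by
  intro n
  induction n with
  | zero => exact ⟨continuous_const, continuous_const⟩
  | succ n ih =>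
    obtain ⟨ih1, ih2⟩ := ih
    constructor
    · show Continuous fun p : ℝ × ℝ =>
        ((n + 1 : ℕ) : ℂ) * ∫ ξ in p.1..p.2, genX Φ n p.1 ξ * Φ ξ ^ ((-1 : ℤ) ^ (n + 1))
      refine continuous_const.mul (contAux (G := fun u ξ => genX Φ n u ξ * Φ ξ ^ ((-1 : ℤ) ^ (n + 1))) ?_)
      exact ih1.mul ((contPhiZ hc h0 _).comp continuous_snd)
    · show Continuous fun p : ℝ × ℝ =>
        ((n + 1 : ℕ) : ℂ) * ∫ ξ in p.1..p.2, genXt Φ n p.1 ξ * Φ ξ ^ (-((-1 : ℤ) ^ (n + 1)))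
      refine continuous_const.mul (contAux (G := fun u ξ => genXt Φ n u ξ * Φ ξ ^ (-((-1 : ℤ) ^ (n + 1)))) ?_)
      exact ih2.mul ((contPhiZ hc h0 _).comp continuous_snd)
open MeasureTheory intervalIntegral Set

lemma tri {f : ℝ → ℝ → ℂ} (hf : Continuous fun p : ℝ × ℝ => f p.1 p.2) {a b : ℝ}
    (hab : a ≤ b) :
    ∫ ξ in a..b, ∫ η in a..ξ, f η ξ = ∫ η in a..b, ∫ ξ in η..b, f η ξ := by
  set F : ℝ × ℝ → ℂ := fun p => if p.1 ≤ p.2 then f p.1 p.2 else 0 with hF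
  have hFmeas : StronglyMeasurable F := by
    have : F = Set.indicator {p : ℝ × ℝ | p.1 ≤ p.2} (fun p => f p.1 p.2) := by
      funext p; simp [hF, Set.indicator, Set.mem_setOf_eq]
    rw [this]
    exact hf.stronglyMeasurable.indicator
      (isClosed_le continuous_fst continuous_snd).measurableSet
  -- slice integrability
  have hslice1 : ∀ ξ u v : ℝ, IntervalIntegrable (fun η => F (η, ξ)) volume u v := by
    intro ξ u v
    have : (fun η => F (η, ξ)) = Set.indicator (Iic ξ) (fun η => f η ξ) := by
      funext η; simp [hF, Set.indicator, Set.mem_Iic]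
    have hi : IntervalIntegrable (fun η : ℝ => f η ξ) volume u v :=
      (hf.comp ((by fun_prop : Continuous fun η : ℝ => ((η, ξ) : ℝ × ℝ)))).intervalIntegrable u v
    rw [intervalIntegrable_iff] at hi
    rw [this, intervalIntegrable_iff]
    exact hi.indicator measurableSet_Iic
  have hslice2 : ∀ η u v : ℝ, IntervalIntegrable (fun ξ => F (η, ξ)) volume u v := by
    intro η u v
    have : (fun ξ => F (η, ξ)) = Set.indicator (Ici η) (fun ξ => f η ξ) := by
      funext ξ; simp [hF, Set.indicator, Set.mem_Ici]
    have hi : IntervalIntegrable (fun ξ : ℝ => f η ξ) volume u v :=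
      (hf.comp ((by fun_prop : Continuous fun ξ : ℝ => ((η, ξ) : ℝ × ℝ)))).intervalIntegrable u v
    rw [intervalIntegrable_iff] at hi
    rw [this, intervalIntegrable_iff]
    exact hi.indicator measurableSet_Ici
  -- Step A : inner integral in η
  have stepA : ∀ ξ ∈ Icc a b, ∫ η in a..b, F (η, ξ) = ∫ η in a..ξ, f η ξ := by
    intro ξ hξ
    rw [← integral_add_adjacent_intervals (hslice1 ξ a ξ) (hslice1 ξ ξ b)]
    have h1 : ∫ η in a..ξ, F (η, ξ) = ∫ η in a..ξ, f η ξ := by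
      apply integral_congr
      intro η hη
      rw [uIcc_of_le hξ.1] at hη
      simp [hF, hη.2]
    have h2 : ∫ η in ξ..b, F (η, ξ) = 0 := by
      rw [integral_of_le hξ.2]
      rw [show (0:ℂ) = ∫ η in Ioc ξ b, (0:ℂ) by simp]
      apply setIntegral_congr_fun measurableSet_Ioc
      intro η hη
      simp [hF, not_le.mpr hη.1]
    rw [h1, h2, add_zero]
  -- Step C : inner integral in ξ
  have stepC : ∀ η ∈ Icc a b, ∫ ξ in a..b, F (η, ξ) = ∫ ξ in η..b, f η ξ := by
    intro η hη
    rw [← integral_add_adjacent_intervals (hslice2 η a η) (hslice2 η η b)]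
    have h2 : ∫ ξ in η..b, F (η, ξ) = ∫ ξ in η..b, f η ξ := by
      apply integral_congr
      intro ξ hξ
      rw [uIcc_of_le hη.2] at hξ
      simp [hF, hξ.1]
    have h1 : ∫ ξ in a..η, F (η, ξ) = 0 := by
      rw [integral_of_le hη.1]
      rw [show (0:ℂ) = ∫ ξ in Ioc a η, (0:ℂ) by simp]
      apply setIntegral_congr_ae measurableSet_Ioc
      have hae : ∀ᵐ ξ : ℝ, ξ ≠ η := by
        rw [Filter.eventually_iff, mem_ae_iff]
        have h0 : volume ({η} : Set ℝ) = 0 := measure_singleton η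
        convert h0 using 2
        ext x; simp
      filter_upwards [hae] with ξ hξη hmem
      have : ¬ η ≤ ξ := fun h => hξη (le_antisymm hmem.2 h)
      simp [hF, this]
    rw [h2, h1, zero_add]
  -- bound for integrability on the square
  obtain ⟨C, hC⟩ := (isCompact_Icc.prod isCompact_Icc).exists_bound_of_continuousOn
    (hf.continuousOn (s := Icc a b ×ˢ Icc a b))
  have hC' : ∀ p ∈ Icc a b ×ˢ Icc a b, ‖F p‖ ≤ max C 0 := by
    intro p hp
    by_cases h : p.1 ≤ p.2
    · simpa [hF, h] using (hC p hp).trans (le_max_left _ 0)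
    · simp [hF, h, le_max_right]
  -- integrability on the product
  have hInt : Integrable (Function.uncurry fun ξ η => F (η, ξ))
      ((volume.restrict (Ioc a b)).prod (volume.restrict (Ioc a b))) := by
    rw [Measure.prod_restrict]
    apply Measure.integrableOn_of_bounded (M := max C 0)
    · rw [Measure.prod_prod]
      exact (ENNReal.mul_lt_top measure_Ioc_lt_top measure_Ioc_lt_top).ne
    · exact ((hFmeas.comp_measurable measurable_swap).aestronglyMeasurable)
    · filter_upwards [ae_restrict_mem (measurableSet_Ioc.prod measurableSet_Ioc)] with p hp
      exact hC' p.swap ⟨Ioc_subset_Icc_self hp.2, Ioc_subset_Icc_self hp.1⟩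
  -- assemble
  calc ∫ ξ in a..b, ∫ η in a..ξ, f η ξ
      = ∫ ξ in a..b, ∫ η in a..b, F (η, ξ) := by
        apply integral_congr
        intro ξ hξ
        rw [uIcc_of_le hab] at hξ
        exact (stepA ξ hξ).symm
    _ = ∫ ξ in Ioc a b, ∫ η in Ioc a b, F (η, ξ) := by
        rw [integral_of_le hab]
        apply setIntegral_congr_fun measurableSet_Ioc
        intro ξ _
        exact integral_of_le hab
    _ = ∫ η in Ioc a b, ∫ ξ in Ioc a b, F (η, ξ) := integral_integral_swap hInt
    _ = ∫ η in a..b, ∫ ξ in a..b, F (η, ξ) := by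
        rw [integral_of_le hab]
        apply setIntegral_congr_fun measurableSet_Ioc
        intro η _
        exact (integral_of_le hab).symm
    _ = ∫ η in a..b, ∫ ξ in η..b, f η ξ := by
        apply integral_congr
        intro η hη
        rw [uIcc_of_le hab] at hη
        exact stepC η hη

lemma flipflip {g : ℝ → ℝ → ℂ} (c d : ℝ) :
    ∫ u in c..d, ∫ v in c..u, g u v = ∫ u in d..c, ∫ v in u..c, g u v := by
  rw [integral_symm d c, ← intervalIntegral.integral_neg]
  apply integral_congr
  intro u _
  show -∫ v in c..u, g u v = ∫ v in u..c, g u v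
  rw [integral_symm u c, neg_neg]

lemma triFull {f : ℝ → ℝ → ℂ} (hf : Continuous fun p : ℝ × ℝ => f p.1 p.2) (x₀ x : ℝ) :
    ∫ ξ in x₀..x, ∫ η in x₀..ξ, f η ξ = ∫ η in x₀..x, ∫ ξ in η..x, f η ξ := by
  rcases le_total x₀ x with h | h
  · exact tri hf h
  · have hswap : Continuous fun p : ℝ × ℝ => f p.2 p.1 :=
      hf.comp continuous_swap
    have t2 := tri (f := fun η ξ => f ξ η) hswap h
    calc ∫ ξ in x₀..x, ∫ η in x₀..ξ, f η ξ
        = ∫ ξ in x..x₀, ∫ η in ξ..x₀, f η ξ := flipflip (g := fun u v => f v u) x₀ x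
      _ = ∫ η in x..x₀, ∫ ξ in x..η, f η ξ := t2.symm
      _ = ∫ η in x₀..x, ∫ ξ in η..x, f η ξ := flipflip (g := fun u v => f u v) x x₀

lemma lemB {Φ : ℝ → ℂ} (hc : Continuous Φ) (h0 : ∀ y, Φ y ≠ 0) :
    ∀ n, ∀ x₀ x : ℝ,
      genX Φ (n + 1) x₀ x
        = ((n + 1 : ℕ) : ℂ) * ∫ η in x₀..x, Φ η ^ (-1 : ℤ) * genXt Φ n η x ∧
      genXt Φ (n + 1) x₀ x
        = ((n + 1 : ℕ) : ℂ) * ∫ η in x₀..x, Φ η ^ (1 : ℤ) * genX Φ n η x := by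
  intro n
  induction n with
  | zero =>
    intro x₀ x
    constructor
    · rw [genX]
      simp [genX, genXt]
    · rw [genXt]
      simp [genX, genXt]
  | succ n ih =>
    intro x₀ x
    have e2 : ((-1 : ℤ) ^ (n + 1 + 1)) = -((-1 : ℤ) ^ (n + 1)) := by ring
    have e2' : (-((-1 : ℤ) ^ (n + 1 + 1))) = ((-1 : ℤ) ^ (n + 1)) := by ring
    obtain ⟨cX, cXt⟩ := genX_cont hc h0 n
    obtain ⟨cX1, cXt1⟩ := genX_cont hc h0 (n + 1)
    constructor
    · have hcont : Continuous fun p : ℝ × ℝ =>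
          (Φ p.1 ^ (-1 : ℤ) * genXt Φ n p.1 p.2) * Φ p.2 ^ (-((-1 : ℤ) ^ (n + 1))) :=
        (((contPhiZ hc h0 _).comp continuous_fst).mul cXt).mul
          ((contPhiZ hc h0 _).comp continuous_snd)
      calc genX Φ (n + 1 + 1) x₀ x
          = ((n + 1 + 1 : ℕ) : ℂ) *
            ∫ ξ in x₀..x, genX Φ (n + 1) x₀ ξ * Φ ξ ^ ((-1 : ℤ) ^ (n + 1 + 1)) := by rw [genX]
        _ = ((n + 1 + 1 : ℕ) : ℂ) * ∫ ξ in x₀..x, ((n + 1 : ℕ) : ℂ) *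
              ((∫ η in x₀..ξ, Φ η ^ (-1 : ℤ) * genXt Φ n η ξ) *
                Φ ξ ^ (-((-1 : ℤ) ^ (n + 1)))) := by
            rw [e2]
            congr 1
            apply integral_congr
            intro ξ _
            show genX Φ (n + 1) x₀ ξ * Φ ξ ^ (-((-1 : ℤ) ^ (n + 1))) = _
            rw [(ih x₀ ξ).1]; ring
        _ = ((n + 1 + 1 : ℕ) : ℂ) * (((n + 1 : ℕ) : ℂ) *
              ∫ ξ in x₀..x, (∫ η in x₀..ξ, Φ η ^ (-1 : ℤ) * genXt Φ n η ξ) *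
                Φ ξ ^ (-((-1 : ℤ) ^ (n + 1)))) := by
            rw [intervalIntegral.integral_const_mul]
        _ = ((n + 1 + 1 : ℕ) : ℂ) * (((n + 1 : ℕ) : ℂ) *
              ∫ ξ in x₀..x, ∫ η in x₀..ξ,
                (Φ η ^ (-1 : ℤ) * genXt Φ n η ξ) * Φ ξ ^ (-((-1 : ℤ) ^ (n + 1)))) := by
            congr 2
            apply integral_congr
            intro ξ _
            show (∫ η in x₀..ξ, Φ η ^ (-1 : ℤ) * genXt Φ n η ξ) *
                Φ ξ ^ (-((-1 : ℤ) ^ (n + 1))) = _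
            rw [← intervalIntegral.integral_mul_const]
        _ = ((n + 1 + 1 : ℕ) : ℂ) * (((n + 1 : ℕ) : ℂ) *
              ∫ η in x₀..x, ∫ ξ in η..x,
                (Φ η ^ (-1 : ℤ) * genXt Φ n η ξ) * Φ ξ ^ (-((-1 : ℤ) ^ (n + 1)))) := by
            congr 2
            exact triFull hcont x₀ x
        _ = ((n + 1 + 1 : ℕ) : ℂ) * ∫ η in x₀..x, Φ η ^ (-1 : ℤ) *
              (((n + 1 : ℕ) : ℂ) * ∫ ξ in η..x,
                genXt Φ n η ξ * Φ ξ ^ (-((-1 : ℤ) ^ (n + 1)))) := by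
            congr 1
            rw [← intervalIntegral.integral_const_mul]
            apply integral_congr
            intro η _
            show ((n + 1 : ℕ) : ℂ) * ∫ ξ in η..x,
                (Φ η ^ (-1 : ℤ) * genXt Φ n η ξ) * Φ ξ ^ (-((-1 : ℤ) ^ (n + 1))) = _
            have hpull : ∫ ξ in η..x,
                (Φ η ^ (-1 : ℤ) * genXt Φ n η ξ) * Φ ξ ^ (-((-1 : ℤ) ^ (n + 1)))
                = Φ η ^ (-1 : ℤ) * ∫ ξ in η..x,
                    genXt Φ n η ξ * Φ ξ ^ (-((-1 : ℤ) ^ (n + 1))) := by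
              rw [← intervalIntegral.integral_const_mul]
              apply integral_congr
              intro ξ _
              show (Φ η ^ (-1 : ℤ) * genXt Φ n η ξ) * Φ ξ ^ (-((-1 : ℤ) ^ (n + 1))) = _
              ring
            rw [hpull]
            ring
        _ = ((n + 1 + 1 : ℕ) : ℂ) * ∫ η in x₀..x, Φ η ^ (-1 : ℤ) * genXt Φ (n + 1) η x := by
            congr 1
    · have hcont : Continuous fun p : ℝ × ℝ =>
          (Φ p.1 ^ (1 : ℤ) * genX Φ n p.1 p.2) * Φ p.2 ^ ((-1 : ℤ) ^ (n + 1)) :=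
        (((contPhiZ hc h0 _).comp continuous_fst).mul cX).mul
          ((contPhiZ hc h0 _).comp continuous_snd)
      calc genXt Φ (n + 1 + 1) x₀ x
          = ((n + 1 + 1 : ℕ) : ℂ) *
            ∫ ξ in x₀..x, genXt Φ (n + 1) x₀ ξ * Φ ξ ^ (-((-1 : ℤ) ^ (n + 1 + 1))) := by
            rw [genXt]
        _ = ((n + 1 + 1 : ℕ) : ℂ) * ∫ ξ in x₀..x, ((n + 1 : ℕ) : ℂ) *
              ((∫ η in x₀..ξ, Φ η ^ (1 : ℤ) * genX Φ n η ξ) *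
                Φ ξ ^ ((-1 : ℤ) ^ (n + 1))) := by
            rw [e2']
            congr 1
            apply integral_congr
            intro ξ _
            show genXt Φ (n + 1) x₀ ξ * Φ ξ ^ ((-1 : ℤ) ^ (n + 1)) = _
            rw [(ih x₀ ξ).2]; ring
        _ = ((n + 1 + 1 : ℕ) : ℂ) * (((n + 1 : ℕ) : ℂ) *
              ∫ ξ in x₀..x, (∫ η in x₀..ξ, Φ η ^ (1 : ℤ) * genX Φ n η ξ) *
                Φ ξ ^ ((-1 : ℤ) ^ (n + 1))) := by
            rw [intervalIntegral.integral_const_mul]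
        _ = ((n + 1 + 1 : ℕ) : ℂ) * (((n + 1 : ℕ) : ℂ) *
              ∫ ξ in x₀..x, ∫ η in x₀..ξ,
                (Φ η ^ (1 : ℤ) * genX Φ n η ξ) * Φ ξ ^ ((-1 : ℤ) ^ (n + 1))) := by
            congr 2
            apply integral_congr
            intro ξ _
            show (∫ η in x₀..ξ, Φ η ^ (1 : ℤ) * genX Φ n η ξ) *
                Φ ξ ^ ((-1 : ℤ) ^ (n + 1)) = _
            rw [← intervalIntegral.integral_mul_const]
        _ = ((n + 1 + 1 : ℕ) : ℂ) * (((n + 1 : ℕ) : ℂ) *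
              ∫ η in x₀..x, ∫ ξ in η..x,
                (Φ η ^ (1 : ℤ) * genX Φ n η ξ) * Φ ξ ^ ((-1 : ℤ) ^ (n + 1))) := by
            congr 2
            exact triFull hcont x₀ x
        _ = ((n + 1 + 1 : ℕ) : ℂ) * ∫ η in x₀..x, Φ η ^ (1 : ℤ) *
              (((n + 1 : ℕ) : ℂ) * ∫ ξ in η..x,
                genX Φ n η ξ * Φ ξ ^ ((-1 : ℤ) ^ (n + 1))) := by
            congr 1
            rw [← intervalIntegral.integral_const_mul]
            apply integral_congr
            intro η _
            show ((n + 1 : ℕ) : ℂ) * ∫ ξ in η..x,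
                (Φ η ^ (1 : ℤ) * genX Φ n η ξ) * Φ ξ ^ ((-1 : ℤ) ^ (n + 1)) = _
            have hpull : ∫ ξ in η..x,
                (Φ η ^ (1 : ℤ) * genX Φ n η ξ) * Φ ξ ^ ((-1 : ℤ) ^ (n + 1))
                = Φ η ^ (1 : ℤ) * ∫ ξ in η..x,
                    genX Φ n η ξ * Φ ξ ^ ((-1 : ℤ) ^ (n + 1)) := by
              rw [← intervalIntegral.integral_const_mul]
              apply integral_congr
              intro ξ _
              show (Φ η ^ (1 : ℤ) * genX Φ n η ξ) * Φ ξ ^ ((-1 : ℤ) ^ (n + 1)) = _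
              ring
            rw [hpull]
            ring
        _ = ((n + 1 + 1 : ℕ) : ℂ) * ∫ η in x₀..x, Φ η ^ (1 : ℤ) * genX Φ (n + 1) η x := by
            congr 1

lemma swapLem {Φ : ℝ → ℂ} (hc : Continuous Φ) (h0 : ∀ y, Φ y ≠ 0) :
    ∀ n, ∀ x₀ x : ℝ,
      genX Φ n x x₀
        = (-1 : ℂ) ^ n * (if Even n then genXt Φ n x₀ x else genX Φ n x₀ x) ∧
      genXt Φ n x x₀
        = (-1 : ℂ) ^ n * (if Even n then genX Φ n x₀ x else genXt Φ n x₀ x) := by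
  intro n
  induction n with
  | zero => intro x₀ x; simp [genX, genXt]
  | succ n ih =>
    intro x₀ x
    have core : ∀ (G : ℝ → ℂ) (e : ℤ),
        ((n + 1 : ℕ) : ℂ) * ∫ ξ in x..x₀, ((-1 : ℂ) ^ n * (G ξ * Φ ξ ^ e))
          = (-1 : ℂ) ^ (n + 1) *
            (((n + 1 : ℕ) : ℂ) * ∫ ξ in x₀..x, Φ ξ ^ e * G ξ) := by
      intro G e
      rw [intervalIntegral.integral_const_mul, integral_symm x₀ x]
      rw [show ∫ ξ in x₀..x, G ξ * Φ ξ ^ e = ∫ ξ in x₀..x, Φ ξ ^ e * G ξ from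
        integral_congr fun ξ _ => mul_comm _ _]
      rw [pow_succ]
      ring
    rcases Nat.even_or_odd n with hpar | hpar
    · -- n even
      have eX : ((-1 : ℤ) ^ (n + 1)) = -1 := (hpar.add_one).neg_one_pow
      have eXt : (-((-1 : ℤ) ^ (n + 1))) = 1 := by rw [eX]; ring
      have hne : ¬ Even (n + 1) := by simp [Nat.even_add_one, hpar]
      constructor
      · rw [if_neg hne, (lemB hc h0 n x₀ x).1]
        simp only [genX]
        rw [eX, ← core (fun ξ => genXt Φ n ξ x) (-1)]
        congr 1
        apply integral_congr
        intro ξ _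
        show genX Φ n x ξ * Φ ξ ^ (-1 : ℤ) = _
        rw [(ih ξ x).1, if_pos hpar]
        ring
      · rw [if_neg hne, (lemB hc h0 n x₀ x).2]
        simp only [genXt]
        rw [eXt, ← core (fun ξ => genX Φ n ξ x) 1]
        congr 1
        apply integral_congr
        intro ξ _
        show genXt Φ n x ξ * Φ ξ ^ (1 : ℤ) = _
        rw [(ih ξ x).2, if_pos hpar]
        ring
    · -- n odd
      have eX : ((-1 : ℤ) ^ (n + 1)) = 1 := (hpar.add_one).neg_one_pow
      have eXt : (-((-1 : ℤ) ^ (n + 1))) = -1 := by rw [eX]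
      have hpe : Even (n + 1) := hpar.add_one
      have hne : ¬ Even n := Nat.not_even_iff_odd.mpr hpar
      constructor
      · rw [if_pos hpe, (lemB hc h0 n x₀ x).2]
        simp only [genX]
        rw [eX, ← core (fun ξ => genX Φ n ξ x) 1]
        congr 1
        apply integral_congr
        intro ξ _
        show genX Φ n x ξ * Φ ξ ^ (1 : ℤ) = _
        rw [(ih ξ x).1, if_neg hne]
        ring
      · rw [if_pos hpe, (lemB hc h0 n x₀ x).1]
        simp only [genXt]
        rw [eXt, ← core (fun ξ => genXt Φ n ξ x) (-1)]
        congr 1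
        apply integral_congr
        intro ξ _
        show genXt Φ n x ξ * Φ ξ ^ (-1 : ℤ) = _
        rw [(ih ξ x).2, if_neg hne]
        ring

lemma genX_congr {Φ Ψ : ℝ → ℂ} {a b : ℝ} (h : ∀ y ∈ Set.Icc a b, Φ y = Ψ y) :
    ∀ n, ∀ x₀ ∈ Set.Icc a b, ∀ x ∈ Set.Icc a b,
      genX Φ n x₀ x = genX Ψ n x₀ x ∧ genXt Φ n x₀ x = genXt Ψ n x₀ x := by
  intro n
  induction n with
  | zero => intro x₀ _ x _; exact ⟨rfl, rfl⟩
  | succ n ih =>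
    intro x₀ hx₀ x hx
    have hsub : Set.uIcc x₀ x ⊆ Set.Icc a b := Set.uIcc_subset_Icc hx₀ hx
    constructor
    · simp only [genX]
      congr 1
      apply integral_congr
      intro ξ hξ
      have hξ' := hsub hξ
      show genX Φ n x₀ ξ * Φ ξ ^ ((-1 : ℤ) ^ (n + 1))
        = genX Ψ n x₀ ξ * Ψ ξ ^ ((-1 : ℤ) ^ (n + 1))
      rw [(ih x₀ hx₀ ξ hξ').1, h ξ hξ']
    · simp only [genXt]
      congr 1
      apply integral_congr
      intro ξ hξ
      have hξ' := hsub hξ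
      show genXt Φ n x₀ ξ * Φ ξ ^ (-((-1 : ℤ) ^ (n + 1)))
        = genXt Ψ n x₀ ξ * Ψ ξ ^ (-((-1 : ℤ) ^ (n + 1)))
      rw [(ih x₀ hx₀ ξ hξ').2, h ξ hξ']

theorem stmt_2 (a b : ℝ) (Φ : ℝ → ℂ) (hΦc : ContinuousOn Φ (Set.Icc a b))
    (hΦ0 : ∀ y ∈ Set.Icc a b, Φ y ≠ 0) (x₀ x : ℝ)
    (hx₀ : x₀ ∈ Set.Icc a b) (hx : x ∈ Set.Icc a b) (n : ℕ) (hn : Odd n) :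
    genX Φ n x₀ x = -genX Φ n x x₀ ∧ genXt Φ n x₀ x = -genXt Φ n x x₀ := by
  have hab : a ≤ b := le_trans hx₀.1 hx₀.2
  set Ψ : ℝ → ℂ := fun y => Φ (Set.projIcc a b hab y) with hΨdef
  have hmem : ∀ y : ℝ, ((Set.projIcc a b hab y : ℝ)) ∈ Set.Icc a b :=
    fun y => (Set.projIcc a b hab y).2
  have hproj : Continuous fun y : ℝ => ((Set.projIcc a b hab y : ℝ)) :=
    continuous_subtype_val.comp (continuous_projIcc)
  have hΨc : Continuous Ψ := hΦc.comp_continuous hproj hmem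
  have hΨ0 : ∀ y, Ψ y ≠ 0 := fun y => hΦ0 _ (hmem y)
  have hagree : ∀ y ∈ Set.Icc a b, Φ y = Ψ y := by
    intro y hy
    rw [hΨdef]
    simp only []
    rw [Set.projIcc_of_mem hab hy]
  obtain ⟨hgx, hgxt⟩ := genX_congr hagree n x₀ hx₀ x hx
  obtain ⟨hgx', hgxt'⟩ := genX_congr hagree n x hx x₀ hx₀
  have hsw := swapLem hΨc hΨ0 n x₀ x
  have hne : ¬ Even n := Nat.not_even_iff_odd.mpr hn
  have h1 : (-1 : ℂ) ^ n = -1 := hn.neg_one_pow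
  constructor
  · rw [hgx, hgx', hsw.1, if_neg hne, h1]
    ring
  · rw [hgxt, hgxt', hsw.2, if_neg hne, h1]
    ring
end

section
/- The Φ-hyperbolic functions satisfy the supersymmetric hyperbolic identity Ch(x₀,x)·C̃h(x₀,x) − Sh(x₀,x)·S̃h(x₀,x) = 1 for all x₀, x ∈ [a,b]. -/
section aux
variable {Ψ : ℝ → ℂ} (hc : Continuous Ψ) (h0 : ∀ y, Ψ y ≠ 0)
include hc h0

lemma contPow (e : ℤ) : Continuous fun y => Ψ y ^ e :=
  hc.zpow₀ e (fun a => Or.inl (h0 a))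

lemma genX_continuous (n : ℕ) (x₀ : ℝ) : Continuous (genX Ψ n x₀) := by
  induction n with
  | zero => exact continuous_const
  | succ n ih =>
    show Continuous fun x => ((n+1:ℕ):ℂ) * ∫ ξ in x₀..x, genX Ψ n x₀ ξ * Ψ ξ ^ ((-1:ℤ)^(n+1))
    exact continuous_const.mul (intervalIntegral.continuous_primitive
      (fun a b => ((ih.mul (contPow hc h0 _)).intervalIntegrable a b)) x₀)

lemma genXt_continuous (n : ℕ) (x₀ : ℝ) : Continuous (genXt Ψ n x₀) := by
  induction n with
  | zero => exact continuous_const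
  | succ n ih =>
    show Continuous fun x => ((n+1:ℕ):ℂ) * ∫ ξ in x₀..x, genXt Ψ n x₀ ξ * Ψ ξ ^ (-((-1:ℤ)^(n+1)))
    exact continuous_const.mul (intervalIntegral.continuous_primitive
      (fun a b => ((ih.mul (contPow hc h0 _)).intervalIntegrable a b)) x₀)

lemma genX_hasDerivAt (n : ℕ) (x₀ x : ℝ) :
    HasDerivAt (genX Ψ n x₀) ((n:ℂ) * genX Ψ (n-1) x₀ x * Ψ x ^ ((-1:ℤ)^n)) x := by
  cases n with
  | zero => simp only [Nat.cast_zero, zero_mul]; exact hasDerivAt_const x (1:ℂ)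
  | succ n =>
    have hint : Continuous fun ξ => genX Ψ n x₀ ξ * Ψ ξ ^ ((-1:ℤ)^(n+1)) :=
      (genX_continuous hc h0 n x₀).mul (contPow hc h0 _)
    have h := (intervalIntegral.integral_hasDerivAt_right (hint.intervalIntegrable x₀ x)
      (hint.stronglyMeasurableAtFilter _ _) hint.continuousAt).const_mul ((n+1:ℕ):ℂ)
    show HasDerivAt (fun x => ((n+1:ℕ):ℂ) * ∫ ξ in x₀..x, genX Ψ n x₀ ξ * Ψ ξ ^ ((-1:ℤ)^(n+1))) _ x
    convert h using 1
    · rfl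
    push_cast
    ring

lemma genXt_hasDerivAt (n : ℕ) (x₀ x : ℝ) :
    HasDerivAt (genXt Ψ n x₀) ((n:ℂ) * genXt Ψ (n-1) x₀ x * Ψ x ^ (-((-1:ℤ)^n))) x := by
  cases n with
  | zero => simp only [Nat.cast_zero, zero_mul]; exact hasDerivAt_const x (1:ℂ)
  | succ n =>
    have hint : Continuous fun ξ => genXt Ψ n x₀ ξ * Ψ ξ ^ (-((-1:ℤ)^(n+1))) :=
      (genXt_continuous hc h0 n x₀).mul (contPow hc h0 _)
    have h := (intervalIntegral.integral_hasDerivAt_right (hint.intervalIntegrable x₀ x)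
      (hint.stronglyMeasurableAtFilter _ _) hint.continuousAt).const_mul ((n+1:ℕ):ℂ)
    show HasDerivAt (fun x => ((n+1:ℕ):ℂ) * ∫ ξ in x₀..x, genXt Ψ n x₀ ξ * Ψ ξ ^ (-((-1:ℤ)^(n+1)))) _ x
    convert h using 1
    · rfl
    push_cast
    ring

omit hc h0 in
lemma genX_self (n : ℕ) (x₀ : ℝ) (hn : n ≠ 0) : genX Ψ n x₀ x₀ = 0 := by
  cases n with
  | zero => exact absurd rfl hn
  | succ n => show ((n+1:ℕ):ℂ) * ∫ ξ in x₀..x₀, _ = 0; simp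

omit hc h0 in
lemma genXt_self (n : ℕ) (x₀ : ℝ) (hn : n ≠ 0) : genXt Ψ n x₀ x₀ = 0 := by
  cases n with
  | zero => exact absurd rfl hn
  | succ n => show ((n+1:ℕ):ℂ) * ∫ ξ in x₀..x₀, _ = 0; simp

variable {M : ℝ} (hM : ∀ y : ℝ, ‖Ψ y‖ ≤ M ∧ ‖(Ψ y)⁻¹‖ ≤ M)
include hM

omit hc h0 in
lemma normPow (y : ℝ) (n : ℕ) : ‖Ψ y ^ ((-1:ℤ)^n)‖ ≤ M ∧ ‖Ψ y ^ (-((-1:ℤ)^n))‖ ≤ M := by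
  rcases Nat.even_or_odd n with h | h
  · rw [h.neg_one_pow]
    exact ⟨by rw [zpow_one]; exact (hM y).1, by rw [zpow_neg, zpow_one]; exact (hM y).2⟩
  · rw [h.neg_one_pow]
    exact ⟨by rw [zpow_neg_one]; exact (hM y).2, by rw [neg_neg, zpow_one]; exact (hM y).1⟩

lemma genX_norm_le (n : ℕ) (x₀ x : ℝ) : ‖genX Ψ n x₀ x‖ ≤ (M * |x - x₀|) ^ n := by
  have hM0 : 0 ≤ M := le_trans (norm_nonneg _) (hM 0).1
  induction n generalizing x with
  | zero => simp [genX]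
  | succ n ih =>
    show ‖((n+1:ℕ):ℂ) * ∫ ξ in x₀..x, genX Ψ n x₀ ξ * Ψ ξ ^ ((-1:ℤ)^(n+1))‖ ≤ _
    rw [norm_mul]
    have key : ‖∫ ξ in x₀..x, genX Ψ n x₀ ξ * Ψ ξ ^ ((-1:ℤ)^(n+1))‖ ≤
        M ^ (n+1) * (|x - x₀| ^ (n + 1) / (n + 1)) := by
      have h1 : ‖∫ ξ in x₀..x, genX Ψ n x₀ ξ * Ψ ξ ^ ((-1:ℤ)^(n+1))‖ ≤
          ∫ ξ in Set.uIoc x₀ x, ‖genX Ψ n x₀ ξ * Ψ ξ ^ ((-1:ℤ)^(n+1))‖ :=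
        intervalIntegral.norm_integral_le_integral_norm_uIoc
      have h2 : ∫ ξ in Set.uIoc x₀ x, ‖genX Ψ n x₀ ξ * Ψ ξ ^ ((-1:ℤ)^(n+1))‖ ≤
          ∫ ξ in Set.uIoc x₀ x, M ^ (n+1) * |ξ - x₀| ^ n := by
        apply MeasureTheory.setIntegral_mono_on
        · exact (((genX_continuous hc h0 n x₀).mul (contPow hc h0 _)).norm.integrableOn_uIoc)
        · exact ((continuous_const.mul ((continuous_id.sub continuous_const).abs.pow n)).integrableOn_uIoc)
        · exact measurableSet_uIoc
        · intro t _
          rw [norm_mul]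
          calc ‖genX Ψ n x₀ t‖ * ‖Ψ t ^ ((-1:ℤ)^(n+1))‖
              ≤ (M * |t - x₀|) ^ n * M := by
                apply mul_le_mul (ih t) (normPow hM t (n+1)).1 (norm_nonneg _)
                positivity
            _ = M ^ (n+1) * |t - x₀| ^ n := by ring
      have h3 : ∫ ξ in Set.uIoc x₀ x, M ^ (n+1) * |ξ - x₀| ^ n =
          M ^ (n+1) * (|x - x₀| ^ (n + 1) / (n + 1)) := by
        rw [MeasureTheory.integral_const_mul, integral_pow_abs_sub_uIoc]
      linarith
    calc ‖((n+1:ℕ):ℂ)‖ * ‖∫ ξ in x₀..x, genX Ψ n x₀ ξ * Ψ ξ ^ ((-1:ℤ)^(n+1))‖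
        ≤ (n+1) * (M ^ (n+1) * (|x - x₀| ^ (n + 1) / (n + 1))) := by
          apply mul_le_mul _ key (norm_nonneg _) (by positivity)
          rw [Complex.norm_natCast]; push_cast; exact le_rfl
      _ = (M * |x - x₀|) ^ (n+1) := by
          field_simp
          ring
lemma genXt_norm_le (n : ℕ) (x₀ x : ℝ) : ‖genXt Ψ n x₀ x‖ ≤ (M * |x - x₀|) ^ n := by
  have hM0 : 0 ≤ M := le_trans (norm_nonneg _) (hM 0).1
  induction n generalizing x with
  | zero => simp [genXt]
  | succ n ih =>
    show ‖((n+1:ℕ):ℂ) * ∫ ξ in x₀..x, genXt Ψ n x₀ ξ * Ψ ξ ^ (-((-1:ℤ)^(n+1)))‖ ≤ _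
    rw [norm_mul]
    have key : ‖∫ ξ in x₀..x, genXt Ψ n x₀ ξ * Ψ ξ ^ (-((-1:ℤ)^(n+1)))‖ ≤
        M ^ (n+1) * (|x - x₀| ^ (n + 1) / (n + 1)) := by
      have h1 : ‖∫ ξ in x₀..x, genXt Ψ n x₀ ξ * Ψ ξ ^ (-((-1:ℤ)^(n+1)))‖ ≤
          ∫ ξ in Set.uIoc x₀ x, ‖genXt Ψ n x₀ ξ * Ψ ξ ^ (-((-1:ℤ)^(n+1)))‖ :=
        intervalIntegral.norm_integral_le_integral_norm_uIoc
      have h2 : ∫ ξ in Set.uIoc x₀ x, ‖genXt Ψ n x₀ ξ * Ψ ξ ^ (-((-1:ℤ)^(n+1)))‖ ≤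
          ∫ ξ in Set.uIoc x₀ x, M ^ (n+1) * |ξ - x₀| ^ n := by
        apply MeasureTheory.setIntegral_mono_on
        · exact (((genXt_continuous hc h0 n x₀).mul (contPow hc h0 _)).norm.integrableOn_uIoc)
        · exact ((continuous_const.mul ((continuous_id.sub continuous_const).abs.pow n)).integrableOn_uIoc)
        · exact measurableSet_uIoc
        · intro t _
          rw [norm_mul]
          calc ‖genXt Ψ n x₀ t‖ * ‖Ψ t ^ (-((-1:ℤ)^(n+1)))‖
              ≤ (M * |t - x₀|) ^ n * M := by
                apply mul_le_mul (ih t) (normPow hM t (n+1)).2 (norm_nonneg _)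
                positivity
            _ = M ^ (n+1) * |t - x₀| ^ n := by ring
      have h3 : ∫ ξ in Set.uIoc x₀ x, M ^ (n+1) * |ξ - x₀| ^ n =
          M ^ (n+1) * (|x - x₀| ^ (n + 1) / (n + 1)) := by
        rw [MeasureTheory.integral_const_mul, integral_pow_abs_sub_uIoc]
      linarith
    calc ‖((n+1:ℕ):ℂ)‖ * ‖∫ ξ in x₀..x, genXt Ψ n x₀ ξ * Ψ ξ ^ (-((-1:ℤ)^(n+1)))‖
        ≤ (n+1) * (M ^ (n+1) * (|x - x₀| ^ (n + 1) / (n + 1))) := by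
          apply mul_le_mul _ key (norm_nonneg _) (by positivity)
          rw [Complex.norm_natCast]; push_cast; exact le_rfl
      _ = (M * |x - x₀|) ^ (n+1) := by
          field_simp
          ring
end aux
lemma choose_mul_sub (n k : ℕ) (h : k < n) :
    n.choose k * (n - k) = n * (n - 1).choose k := by
  obtain ⟨m, rfl⟩ : ∃ m, n = m + 1 := ⟨n - 1, by omega⟩
  have hk : k ≤ m := by omega
  have h1 := Nat.add_one_mul_choose_eq m (m - k)
  have h2 : (m + 1).choose (m - k + 1) = (m + 1).choose k := by
    rw [show m - k + 1 = (m + 1) - k by omega, Nat.choose_symm (by omega)]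
  have h3 : m.choose (m - k) = m.choose k := Nat.choose_symm hk
  simp only [Nat.add_sub_cancel]
  rw [show m + 1 - k = m - k + 1 by omega, ← h2, ← h1, h3]

section aux2
variable {Ψ : ℝ → ℂ} (hc : Continuous Ψ) (h0 : ∀ y, Ψ y ≠ 0)
include hc h0

omit hc h0 in
lemma derivSum (x₀ y : ℝ) (N : ℕ) (hN : N % 2 = 0) :
    ∑ i ∈ Finset.range (N + 1), ((-1:ℂ)^i * (N.choose i) *
      (((i:ℂ) * genX Ψ (i-1) x₀ y * Ψ y ^ ((-1:ℤ)^i)) * genXt Ψ (N-i) x₀ y) +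
      (-1:ℂ)^i * (N.choose i) *
      (genX Ψ i x₀ y * (((N-i : ℕ):ℂ) * genXt Ψ (N-i-1) x₀ y * Ψ y ^ (-((-1:ℤ)^(N-i)))))) = 0 := by
  rw [Finset.sum_add_distrib, Finset.sum_range_succ' (fun i => (-1:ℂ)^i * (N.choose i) *
      (((i:ℂ) * genX Ψ (i-1) x₀ y * Ψ y ^ ((-1:ℤ)^i)) * genXt Ψ (N-i) x₀ y)) N,
    Finset.sum_range_succ (fun i => (-1:ℂ)^i * (N.choose i) *
      (genX Ψ i x₀ y * (((N-i : ℕ):ℂ) * genXt Ψ (N-i-1) x₀ y * Ψ y ^ (-((-1:ℤ)^(N-i)))))) N]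
  simp only [Nat.cast_zero, zero_mul, mul_zero, add_zero, Nat.sub_self, Nat.cast_ofNat]
  rw [← Finset.sum_add_distrib]
  apply Finset.sum_eq_zero
  intro k hk
  have hkN : k < N := Finset.mem_range.mp hk
  have e1 : (N.choose (k+1) * (k+1) : ℕ) = N * (N-1).choose k := by
    have h1 := Nat.add_one_mul_choose_eq (N-1) k
    rw [show N - 1 + 1 = N by omega] at h1
    omega
  have e2 : (N.choose k * (N - k) : ℕ) = N * (N-1).choose k := choose_mul_sub N k hkN
  have e3 : ((-1:ℤ)^(N-k)) = (-1:ℤ)^k := by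
    have hNe : Even N := Nat.even_iff.2 hN
    rcases Nat.even_or_odd k with h | h
    · have hs : Even (N - k) := (Nat.even_sub hkN.le).2 (iff_of_true hNe h)
      rw [hs.neg_one_pow, h.neg_one_pow]
    · have hs : Odd (N - k) := by
        rw [Nat.odd_iff]
        rw [Nat.even_iff] at hNe
        rw [Nat.odd_iff] at h
        omega
      rw [hs.neg_one_pow, h.neg_one_pow]
  have c1 : ((N.choose (k+1) : ℂ) * ((k+1 : ℕ) : ℂ)) = (N : ℂ) * ((N-1).choose k : ℂ) := by
    exact_mod_cast congrArg (Nat.cast : ℕ → ℂ) e1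
  have c2 : ((N.choose k : ℂ) * ((N - k : ℕ) : ℂ)) = (N : ℂ) * ((N-1).choose k : ℂ) := by
    exact_mod_cast congrArg (Nat.cast : ℕ → ℂ) e2
  simp only [Nat.add_sub_cancel, show N - (k+1) = N - k - 1 from by omega, e3,
    pow_succ, Nat.cast_add, Nat.cast_one]
  push_cast [Nat.cast_sub hkN.le] at c1 c2 ⊢
  set P := Ψ y ^ (-((-1:ℤ)^k)) with hP
  set Q := Ψ y ^ ((-1:ℤ)^k * -1) with hQ
  have hPQ : P = Q := by rw [hP, hQ]; congr 1; ring
  rw [← hPQ] at *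
  linear_combination ((-1:ℂ)^k * genX Ψ k x₀ y * genXt Ψ (N-k-1) x₀ y * P) * (c2 - c1)

lemma sumA (x₀ : ℝ) (N : ℕ) (hN : N % 2 = 0) (hN1 : 1 ≤ N) (x : ℝ) :
    ∑ i ∈ Finset.range (N + 1), (-1:ℂ)^i * (N.choose i) *
      (genX Ψ i x₀ x * genXt Ψ (N - i) x₀ x) = 0 := by
  set A : ℝ → ℂ := fun y => ∑ i ∈ Finset.range (N + 1), (-1:ℂ)^i * (N.choose i) *
      (genX Ψ i x₀ y * genXt Ψ (N - i) x₀ y) with hA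
  have hder : ∀ y, HasDerivAt A 0 y := by
    intro y
    have h := HasDerivAt.sum (u := Finset.range (N+1)) (x := y)
      (A := fun i z => (-1:ℂ)^i * (N.choose i) * (genX Ψ i x₀ z * genXt Ψ (N - i) x₀ z))
      (A' := fun i => (-1:ℂ)^i * (N.choose i) *
        (((i:ℂ) * genX Ψ (i-1) x₀ y * Ψ y ^ ((-1:ℤ)^i)) * genXt Ψ (N-i) x₀ y) +
        (-1:ℂ)^i * (N.choose i) *
        (genX Ψ i x₀ y * (((N-i : ℕ):ℂ) * genXt Ψ (N-i-1) x₀ y * Ψ y ^ (-((-1:ℤ)^(N-i))))))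
      (fun i _ => by
        have hd := ((genX_hasDerivAt hc h0 i x₀ y).mul
          (genXt_hasDerivAt hc h0 (N-i) x₀ y)).const_mul ((-1:ℂ)^i * ((N.choose i : ℕ) : ℂ))
        convert hd using 1
        · rfl
        · rfl
        ring)
    rw [derivSum x₀ y N hN] at h
    convert h using 1
    · rfl
    ext z
    rw [Finset.sum_apply]
  have hconst := is_const_of_deriv_eq_zero (𝕜 := ℝ) (f := A)
    (fun y => (hder y).differentiableAt) (fun y => (hder y).deriv) x x₀
  have hzero : A x₀ = 0 := by
    rw [hA]
    apply Finset.sum_eq_zero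
    intro i _
    cases i with
    | zero => rw [genXt_self (N - 0) x₀ (by omega)]; ring
    | succ m => rw [genX_self (m + 1) x₀ (by omega)]; ring
  show A x = 0
  rw [hconst, hzero]

end aux2

lemma sum_range_even_odd (f : ℕ → ℂ) (m : ℕ) :
    ∑ i ∈ Finset.range (2*m+1), f i =
      ∑ j ∈ Finset.range (m+1), f (2*j) + ∑ j ∈ Finset.range m, f (2*j+1) := by
  induction m with
  | zero => simp
  | succ m ih =>
    rw [show 2*(m+1)+1 = (2*m+1)+1+1 by ring, Finset.sum_range_succ, Finset.sum_range_succ, ih,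
      Finset.sum_range_succ (fun j => f (2*j)) (m+1), Finset.sum_range_succ (fun j => f (2*j+1)) m,
      show 2*(m+1) = 2*m+2 by ring, show 2*m+1+1 = 2*m+2 by ring]
    ring

noncomputable def genCh (Φ : ℝ → ℂ) (x₀ x : ℝ) : ℂ :=
  ∑' j : ℕ, genX Φ (2 * j) x₀ x / ((2 * j).factorial : ℂ)

noncomputable def genCht (Φ : ℝ → ℂ) (x₀ x : ℝ) : ℂ :=
  ∑' k : ℕ, genXt Φ (2 * k) x₀ x / ((2 * k).factorial : ℂ)

noncomputable def genSh (Φ : ℝ → ℂ) (x₀ x : ℝ) : ℂ :=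
  ∑' j : ℕ, genX Φ (2 * j + 1) x₀ x / ((2 * j + 1).factorial : ℂ)

noncomputable def genSht (Φ : ℝ → ℂ) (x₀ x : ℝ) : ℂ :=
  ∑' k : ℕ, genXt Φ (2 * k + 1) x₀ x / ((2 * k + 1).factorial : ℂ)

section key
variable {Ψ : ℝ → ℂ} (hc : Continuous Ψ) (h0 : ∀ y, Ψ y ≠ 0)
  {M : ℝ} (hM : ∀ y : ℝ, ‖Ψ y‖ ≤ M ∧ ‖(Ψ y)⁻¹‖ ≤ M)
include hc h0 hM

lemma summable_even (x₀ x : ℝ) :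
    Summable (fun j => ‖genX Ψ (2*j) x₀ x / (((2*j).factorial : ℕ) : ℂ)‖) ∧
    Summable (fun j => ‖genXt Ψ (2*j) x₀ x / (((2*j).factorial : ℕ) : ℂ)‖) ∧
    Summable (fun j => ‖genX Ψ (2*j+1) x₀ x / (((2*j+1).factorial : ℕ) : ℂ)‖) ∧
    Summable (fun j => ‖genXt Ψ (2*j+1) x₀ x / (((2*j+1).factorial : ℕ) : ℂ)‖) := by
  have hM0 : 0 ≤ M := le_trans (norm_nonneg _) (hM 0).1
  set C := M * |x - x₀| with hC
  have hC0 : 0 ≤ C := by positivity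
  have hbound : ∀ n : ℕ, ∀ g : ℂ, ‖g‖ ≤ C ^ n → ‖g / ((n.factorial : ℕ) : ℂ)‖ ≤ C ^ n / (n.factorial : ℝ) := by
    intro n g hg
    rw [norm_div, Complex.norm_natCast]
    gcongr
  have heven : ∀ n : ℕ, C ^ (2*n) / ((2*n).factorial : ℝ) ≤ (C^2) ^ n / (n.factorial : ℝ) := by
    intro n
    rw [pow_mul]
    gcongr
    all_goals omega
  have hodd : ∀ n : ℕ, C ^ (2*n+1) / ((2*n+1).factorial : ℝ) ≤ (C^2) ^ n / (n.factorial : ℝ) * (C+1) := by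
    intro n
    have h1 : C ^ (2*n+1) / ((2*n+1).factorial : ℝ) ≤ C ^ (2*n+1) / (n.factorial : ℝ) := by
      gcongr
      all_goals omega
    have h2 : C ^ (2*n+1) / (n.factorial : ℝ) = (C^2) ^ n / (n.factorial : ℝ) * C := by
      rw [pow_succ, pow_mul]; ring
    rw [h2] at h1
    refine h1.trans ?_
    gcongr
    linarith
  have hsum : Summable (fun n : ℕ => (C^2) ^ n / (n.factorial : ℝ)) :=
    Real.summable_pow_div_factorial (C^2)
  have hsum2 : Summable (fun n : ℕ => (C^2) ^ n / (n.factorial : ℝ) * (C+1)) := hsum.mul_right _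
  refine ⟨?_, ?_, ?_, ?_⟩
  · exact Summable.of_nonneg_of_le (fun j => norm_nonneg _)
      (fun j => (hbound (2*j) _ (genX_norm_le hc h0 hM (2*j) x₀ x)).trans (heven j)) hsum
  · exact Summable.of_nonneg_of_le (fun j => norm_nonneg _)
      (fun j => (hbound (2*j) _ (genXt_norm_le hc h0 hM (2*j) x₀ x)).trans (heven j)) hsum
  · exact Summable.of_nonneg_of_le (fun j => norm_nonneg _)
      (fun j => (hbound (2*j+1) _ (genX_norm_le hc h0 hM (2*j+1) x₀ x)).trans (hodd j)) hsum2
  · exact Summable.of_nonneg_of_le (fun j => norm_nonneg _)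
      (fun j => (hbound (2*j+1) _ (genXt_norm_le hc h0 hM (2*j+1) x₀ x)).trans (hodd j)) hsum2

lemma key (x₀ x : ℝ) :
    genCh Ψ x₀ x * genCht Ψ x₀ x - genSh Ψ x₀ x * genSht Ψ x₀ x = 1 := by
  obtain ⟨h1, h2, h3, h4⟩ := summable_even hc h0 hM x₀ x
  set cX : ℕ → ℂ := fun j => genX Ψ (2*j) x₀ x / (((2*j).factorial : ℕ) : ℂ) with hcX
  set cXt : ℕ → ℂ := fun j => genXt Ψ (2*j) x₀ x / (((2*j).factorial : ℕ) : ℂ) with hcXt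
  set sX : ℕ → ℂ := fun j => genX Ψ (2*j+1) x₀ x / (((2*j+1).factorial : ℕ) : ℂ) with hsX
  set sXt : ℕ → ℂ := fun j => genXt Ψ (2*j+1) x₀ x / (((2*j+1).factorial : ℕ) : ℂ) with hsXt
  have hCC : genCh Ψ x₀ x * genCht Ψ x₀ x =
      ∑' n : ℕ, ∑ kl ∈ Finset.HasAntidiagonal.antidiagonal n, cX kl.1 * cXt kl.2 :=
    tsum_mul_tsum_eq_tsum_sum_antidiagonal_of_summable_norm h1 h2
  have hSS : genSh Ψ x₀ x * genSht Ψ x₀ x =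
      ∑' n : ℕ, ∑ kl ∈ Finset.HasAntidiagonal.antidiagonal n, sX kl.1 * sXt kl.2 :=
    tsum_mul_tsum_eq_tsum_sum_antidiagonal_of_summable_norm h3 h4
  have hccsum : Summable (fun n : ℕ => ∑ kl ∈ Finset.HasAntidiagonal.antidiagonal n, cX kl.1 * cXt kl.2) :=
    (summable_norm_sum_mul_antidiagonal_of_summable_norm h1 h2).of_norm
  have hcc0 : ∑ kl ∈ Finset.HasAntidiagonal.antidiagonal 0, cX kl.1 * cXt kl.2 = 1 := by
    rw [Finset.Nat.sum_antidiagonal_eq_sum_range_succ_mk]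
    simp [hcX, hcXt]
    norm_num [genX, genXt]
  have hshift : ∀ n : ℕ, ∑ kl ∈ Finset.HasAntidiagonal.antidiagonal (n+1), cX kl.1 * cXt kl.2 =
      ∑ kl ∈ Finset.HasAntidiagonal.antidiagonal n, sX kl.1 * sXt kl.2 := by
    intro n
    set N := 2*n+2 with hN
    have hNf : ((N.factorial : ℕ) : ℂ) ≠ 0 := Nat.cast_ne_zero.2 N.factorial_ne_zero
    have hccform : ∑ kl ∈ Finset.HasAntidiagonal.antidiagonal (n+1), cX kl.1 * cXt kl.2 =
        (∑ j ∈ Finset.range (n+2), ((N.choose (2*j) : ℕ) : ℂ) *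
          (genX Ψ (2*j) x₀ x * genXt Ψ (N - 2*j) x₀ x)) / ((N.factorial : ℕ) : ℂ) := by
      rw [Finset.Nat.sum_antidiagonal_eq_sum_range_succ_mk, Finset.sum_div]
      apply Finset.sum_congr rfl
      intro j hj
      have hjn : j ≤ n + 1 := by have := Finset.mem_range.mp hj; omega
      have hidx : 2*(n+1-j) = N - 2*j := by omega
      have h2jN : 2*j ≤ N := by omega
      have hfact : ((N.choose (2*j) : ℕ) : ℂ) * (((2*j).factorial : ℕ) : ℂ) *
          (((N - 2*j).factorial : ℕ) : ℂ) = ((N.factorial : ℕ) : ℂ) := by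
        exact_mod_cast congrArg (Nat.cast : ℕ → ℂ) (Nat.choose_mul_factorial_mul_factorial h2jN)
      rw [hcX, hcXt]
      simp only [hidx]
      rw [div_mul_div_comm, div_eq_div_iff (by
          exact mul_ne_zero (Nat.cast_ne_zero.2 (Nat.factorial_ne_zero _))
            (Nat.cast_ne_zero.2 (Nat.factorial_ne_zero _))) hNf]
      linear_combination (-(genX Ψ (2*j) x₀ x * genXt Ψ (N - 2*j) x₀ x)) * hfact
    have hssform : ∑ kl ∈ Finset.HasAntidiagonal.antidiagonal n, sX kl.1 * sXt kl.2 =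
        (∑ j ∈ Finset.range (n+1), ((N.choose (2*j+1) : ℕ) : ℂ) *
          (genX Ψ (2*j+1) x₀ x * genXt Ψ (N - (2*j+1)) x₀ x)) / ((N.factorial : ℕ) : ℂ) := by
      rw [Finset.Nat.sum_antidiagonal_eq_sum_range_succ_mk, Finset.sum_div]
      apply Finset.sum_congr rfl
      intro j hj
      have hjn : j ≤ n := by have := Finset.mem_range.mp hj; omega
      have hidx : 2*(n-j)+1 = N - (2*j+1) := by omega
      have h2jN : 2*j+1 ≤ N := by omega
      have hfact : ((N.choose (2*j+1) : ℕ) : ℂ) * (((2*j+1).factorial : ℕ) : ℂ) *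
          (((N - (2*j+1)).factorial : ℕ) : ℂ) = ((N.factorial : ℕ) : ℂ) := by
        exact_mod_cast congrArg (Nat.cast : ℕ → ℂ) (Nat.choose_mul_factorial_mul_factorial h2jN)
      rw [hsX, hsXt]
      simp only [hidx]
      rw [div_mul_div_comm, div_eq_div_iff (by
          exact mul_ne_zero (Nat.cast_ne_zero.2 (Nat.factorial_ne_zero _))
            (Nat.cast_ne_zero.2 (Nat.factorial_ne_zero _))) hNf]
      linear_combination (-(genX Ψ (2*j+1) x₀ x * genXt Ψ (N - (2*j+1)) x₀ x)) * hfact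
    rw [hccform, hssform]
    congr 1
    -- use sumA
    have hA := sumA hc h0 x₀ N (by omega) (by omega) x
    rw [show N + 1 = 2*(n+1)+1 by omega, sum_range_even_odd
      (fun i => (-1:ℂ)^i * (N.choose i) * (genX Ψ i x₀ x * genXt Ψ (N - i) x₀ x)) (n+1)] at hA
    have hE : ∑ j ∈ Finset.range (n+2), (-1:ℂ)^(2*j) * (N.choose (2*j)) *
        (genX Ψ (2*j) x₀ x * genXt Ψ (N - 2*j) x₀ x) =
        ∑ j ∈ Finset.range (n+2), ((N.choose (2*j) : ℕ) : ℂ) *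
          (genX Ψ (2*j) x₀ x * genXt Ψ (N - 2*j) x₀ x) := by
      apply Finset.sum_congr rfl
      intro j _
      rw [Even.neg_one_pow ⟨j, by ring⟩, one_mul]
    have hO : ∑ j ∈ Finset.range (n+1), (-1:ℂ)^(2*j+1) * (N.choose (2*j+1)) *
        (genX Ψ (2*j+1) x₀ x * genXt Ψ (N - (2*j+1)) x₀ x) =
        - ∑ j ∈ Finset.range (n+1), ((N.choose (2*j+1) : ℕ) : ℂ) *
          (genX Ψ (2*j+1) x₀ x * genXt Ψ (N - (2*j+1)) x₀ x) := by
      rw [← Finset.sum_neg_distrib]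
      apply Finset.sum_congr rfl
      intro j _
      rw [Odd.neg_one_pow ⟨j, by ring⟩]
      ring
    rw [show (n+1)+1 = n+2 by omega] at hA
    rw [hE, hO] at hA
    linear_combination hA
  calc genCh Ψ x₀ x * genCht Ψ x₀ x - genSh Ψ x₀ x * genSht Ψ x₀ x
      = (∑' n : ℕ, ∑ kl ∈ Finset.HasAntidiagonal.antidiagonal n, cX kl.1 * cXt kl.2) -
        (∑' n : ℕ, ∑ kl ∈ Finset.HasAntidiagonal.antidiagonal n, sX kl.1 * sXt kl.2) := by rw [hCC, hSS]
    _ = 1 := by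
        rw [hccsum.tsum_eq_zero_add, hcc0]
        have : ∑' n : ℕ, ∑ kl ∈ Finset.HasAntidiagonal.antidiagonal (n+1), cX kl.1 * cXt kl.2 =
            ∑' n : ℕ, ∑ kl ∈ Finset.HasAntidiagonal.antidiagonal n, sX kl.1 * sXt kl.2 :=
          tsum_congr hshift
        rw [this]
        ring

end key

lemma genX_congr_s11 {Φ Ψ : ℝ → ℂ} {s : Set ℝ} (hs : s.OrdConnected)
    (h : ∀ y ∈ s, Φ y = Ψ y) (n : ℕ) {x₀ x : ℝ} (hx₀ : x₀ ∈ s) (hx : x ∈ s) :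
    genX Φ n x₀ x = genX Ψ n x₀ x := by
  induction n generalizing x with
  | zero => rfl
  | succ n ih =>
    show ((n+1:ℕ):ℂ) * ∫ ξ in x₀..x, genX Φ n x₀ ξ * Φ ξ ^ ((-1:ℤ)^(n+1)) =
      ((n+1:ℕ):ℂ) * ∫ ξ in x₀..x, genX Ψ n x₀ ξ * Ψ ξ ^ ((-1:ℤ)^(n+1))
    congr 1
    apply intervalIntegral.integral_congr
    intro ξ hξ
    have hξs : ξ ∈ s := hs.uIcc_subset hx₀ hx hξ
    dsimp only
    rw [ih hξs, h ξ hξs]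

lemma genXt_congr {Φ Ψ : ℝ → ℂ} {s : Set ℝ} (hs : s.OrdConnected)
    (h : ∀ y ∈ s, Φ y = Ψ y) (n : ℕ) {x₀ x : ℝ} (hx₀ : x₀ ∈ s) (hx : x ∈ s) :
    genXt Φ n x₀ x = genXt Ψ n x₀ x := by
  induction n generalizing x with
  | zero => rfl
  | succ n ih =>
    show ((n+1:ℕ):ℂ) * ∫ ξ in x₀..x, genXt Φ n x₀ ξ * Φ ξ ^ (-((-1:ℤ)^(n+1))) =
      ((n+1:ℕ):ℂ) * ∫ ξ in x₀..x, genXt Ψ n x₀ ξ * Ψ ξ ^ (-((-1:ℤ)^(n+1)))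
    congr 1
    apply intervalIntegral.integral_congr
    intro ξ hξ
    have hξs : ξ ∈ s := hs.uIcc_subset hx₀ hx hξ
    dsimp only
    rw [ih hξs, h ξ hξs]

theorem stmt_11 (a b : ℝ) (Φ : ℝ → ℂ) (hΦc : ContinuousOn Φ (Set.Icc a b))
    (hΦ0 : ∀ y ∈ Set.Icc a b, Φ y ≠ 0) (x₀ x : ℝ)
    (hx₀ : x₀ ∈ Set.Icc a b) (hx : x ∈ Set.Icc a b) :
    genCh Φ x₀ x * genCht Φ x₀ x - genSh Φ x₀ x * genSht Φ x₀ x = 1 := by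
  have hab : a ≤ b := hx₀.1.trans hx₀.2
  set Ψ : ℝ → ℂ := fun y => Φ ((Set.projIcc a b hab y : ℝ)) with hΨ
  have hmem : ∀ y : ℝ, ((Set.projIcc a b hab y : ℝ)) ∈ Set.Icc a b :=
    fun y => (Set.projIcc a b hab y).2
  have hc : Continuous Ψ :=
    hΦc.comp_continuous (continuous_subtype_val.comp continuous_projIcc) hmem
  have h0 : ∀ y, Ψ y ≠ 0 := fun y => hΦ0 _ (hmem y)
  have heq : ∀ y ∈ Set.Icc a b, Φ y = Ψ y := by
    intro y hy
    rw [hΨ]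
    simp [Set.projIcc_of_mem hab hy]
  obtain ⟨M, hM⟩ : ∃ M, ∀ y, ‖Ψ y‖ ≤ M ∧ ‖(Ψ y)⁻¹‖ ≤ M := by
    obtain ⟨z, hz, hmax⟩ := isCompact_Icc.exists_isMaxOn (Set.nonempty_Icc.2 hab)
      (hΦc.norm.add ((hΦc.inv₀ hΦ0).norm))
    rw [isMaxOn_iff] at hmax
    refine ⟨‖Φ z‖ + ‖(Φ z)⁻¹‖, fun y => ⟨?_, ?_⟩⟩
    · exact le_trans (le_add_of_nonneg_right (norm_nonneg _)) (hmax _ (hmem y))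
    · exact le_trans (le_add_of_nonneg_left (norm_nonneg _)) (hmax _ (hmem y))
  have hOC : (Set.Icc a b).OrdConnected := Set.ordConnected_Icc
  have hch : genCh Φ x₀ x = genCh Ψ x₀ x :=
    tsum_congr fun j => by rw [genX_congr_s11 hOC heq (2*j) hx₀ hx]
  have hcht : genCht Φ x₀ x = genCht Ψ x₀ x :=
    tsum_congr fun j => by rw [genXt_congr hOC heq (2*j) hx₀ hx]
  have hsh : genSh Φ x₀ x = genSh Ψ x₀ x :=
    tsum_congr fun j => by rw [genX_congr_s11 hOC heq (2*j+1) hx₀ hx]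
  have hsht : genSht Φ x₀ x = genSht Ψ x₀ x :=
    tsum_congr fun j => by rw [genXt_congr hOC heq (2*j+1) hx₀ hx]
  rw [hch, hcht, hsh, hsht]
  exact key hc h0 hM x₀ x
end

section
/- For all m, n ≥ 1 and all x₀, x ∈ [a,b], the Volterra composition of the first type satisfies (Φ X^(2n−1)) ⋆ X^(2m) = ((2n−1)!(2m)!/(2n+2m)!) X^(2n+2m) and (Φ X^(2n−1)) ⋆ X^(2m−1) = ((2n−1)!(2m−1)!/(2n+2m−1)!) X^(2n+2m−1), where (f ⋆ g)(x₀,x) = ∫_{x₀}^x f(x₀,ξ) g(ξ,x) dξ. -/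
/-- Volterra composition of the first type. -/
noncomputable def volt (f g : ℝ → ℝ → ℂ) (x y : ℝ) : ℂ :=
  ∫ ξ in x..y, f x ξ * g ξ y

open MeasureTheory Set Function

lemma genX_zero (Φ : ℝ → ℂ) (x₀ x : ℝ) : genX Φ 0 x₀ x = 1 := rfl

lemma genX_succ (Φ : ℝ → ℂ) (n : ℕ) (x₀ x : ℝ) :
    genX Φ (n + 1) x₀ x =
      ((n + 1 : ℕ) : ℂ) * ∫ ξ in x₀..x, genX Φ n x₀ ξ * Φ ξ ^ ((-1 : ℤ) ^ (n + 1)) := rfl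

lemma genX_continuous_s18 (Ψ : ℝ → ℂ) (hΨ : Continuous Ψ) (h0 : ∀ y, Ψ y ≠ 0) (n : ℕ) :
    Continuous (fun p : ℝ × ℝ => genX Ψ n p.1 p.2) := by
  induction n with
  | zero => simpa [genX_zero] using (continuous_const : Continuous fun _ : ℝ × ℝ => (1:ℂ))
  | succ n ih =>
    set e : ℤ := (-1 : ℤ) ^ (n + 1) with he
    have hz : Continuous fun ξ : ℝ => Ψ ξ ^ e := hΨ.zpow₀ e (fun y => Or.inl (h0 y))
    have hcont : Continuous (Function.uncurry fun (p : ℝ × ℝ) (ξ : ℝ) =>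
        genX Ψ n p.1 ξ * Ψ ξ ^ e) := by
      apply Continuous.mul
      · exact ih.comp ((continuous_fst.fst).prodMk continuous_snd)
      · exact hz.comp continuous_snd
    have h1 : Continuous fun p : ℝ × ℝ => ∫ ξ in (0:ℝ)..p.2, genX Ψ n p.1 ξ * Ψ ξ ^ e :=
      intervalIntegral.continuous_parametric_intervalIntegral_of_continuous hcont continuous_snd
    have h2 : Continuous fun p : ℝ × ℝ => ∫ ξ in (0:ℝ)..p.1, genX Ψ n p.1 ξ * Ψ ξ ^ e :=
      intervalIntegral.continuous_parametric_intervalIntegral_of_continuous hcont continuous_fst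
    have key : ∀ p : ℝ × ℝ, genX Ψ (n+1) p.1 p.2 =
        ((n + 1 : ℕ) : ℂ) * ((∫ ξ in (0:ℝ)..p.2, genX Ψ n p.1 ξ * Ψ ξ ^ e)
          - ∫ ξ in (0:ℝ)..p.1, genX Ψ n p.1 ξ * Ψ ξ ^ e) := by
      intro p
      rw [genX_succ]
      congr 1
      have hi : ∀ u v : ℝ, IntervalIntegrable (fun ξ => genX Ψ n p.1 ξ * Ψ ξ ^ e) volume u v := by
        intro u v
        exact ((ih.comp (Continuous.prodMk_right p.1)).mul hz).intervalIntegrable u v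
      rw [intervalIntegral.integral_interval_sub_left (hi 0 p.2) (hi 0 p.1)]
    rw [funext key]
    exact continuous_const.mul (h1.sub h2)

lemma swap_le (F : ℝ → ℝ → ℂ) (hF : Continuous (Function.uncurry F)) {a b : ℝ} (hab : a ≤ b) :
    (∫ ξ in a..b, ∫ η in ξ..b, F ξ η) = ∫ η in a..b, ∫ ξ in a..η, F ξ η := by
  set G : ℝ → ℝ → ℂ := fun ξ η => if ξ < η then F ξ η else 0 with hG
  -- integrability of G on the product
  obtain ⟨C, hC⟩ := (isCompact_Icc.prod isCompact_Icc).exists_bound_of_continuousOn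
    (hF.continuousOn : ContinuousOn (Function.uncurry F) (Icc a b ×ˢ Icc a b))
  have hGmeas : StronglyMeasurable (Function.uncurry G) := by
    have : Function.uncurry G =
        Set.indicator {p : ℝ × ℝ | p.1 < p.2} (Function.uncurry F) := by
      funext p
      simp [Function.uncurry, hG, Set.indicator_apply]
    rw [this]
    exact hF.stronglyMeasurable.indicator (measurableSet_lt measurable_fst measurable_snd)
  have hGint : Integrable (Function.uncurry G)
      ((volume.restrict (Ioc a b)).prod (volume.restrict (Ioc a b))) := by
    rw [Measure.prod_restrict]
    apply Measure.integrableOn_of_bounded (M := max C 0)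
    · rw [Measure.prod_prod]
      exact (ENNReal.mul_lt_top measure_Ioc_lt_top measure_Ioc_lt_top).ne
    · exact hGmeas.aestronglyMeasurable
    · refine (ae_restrict_iff' (measurableSet_Ioc.prod measurableSet_Ioc)).2
        (Filter.Eventually.of_forall fun p hp => ?_)
      rcases lt_or_ge p.1 p.2 with h | h
      · have : Function.uncurry G p = Function.uncurry F p := by
          simp [Function.uncurry, hG, h]
        rw [this]
        exact le_trans (hC p ⟨Ioc_subset_Icc_self hp.1, Ioc_subset_Icc_self hp.2⟩) (le_max_left _ _)
      · have : Function.uncurry G p = 0 := by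
          simp [Function.uncurry, hG, not_lt.2 h]
        simp [this]
  -- rewrite LHS
  rw [intervalIntegral.integral_of_le hab, intervalIntegral.integral_of_le hab]
  have hL : ∀ ξ ∈ Ioc a b, (∫ η in ξ..b, F ξ η) = ∫ η in Ioc a b, G ξ η := by
    intro ξ hξ
    have h1 : (fun η => G ξ η) = Set.indicator (Ioi ξ) (F ξ) := by
      funext η; simp [hG, Set.indicator_apply, Set.mem_Ioi]
    rw [h1, setIntegral_indicator measurableSet_Ioi, intervalIntegral.integral_of_le hξ.2]
    congr 1
    rw [Set.Ioc_inter_Ioi, max_eq_right hξ.1.le]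
  have hR : ∀ η ∈ Ioc a b, (∫ ξ in Ioc a b, G ξ η) = ∫ ξ in a..η, F ξ η := by
    intro η hη
    have h1 : (fun ξ => G ξ η) = Set.indicator (Iio η) (fun ξ => F ξ η) := by
      funext ξ; simp [hG, Set.indicator_apply, Set.mem_Iio]
    rw [h1, setIntegral_indicator measurableSet_Iio, intervalIntegral.integral_of_le hη.1.le]
    have h2 : Ioc a b ∩ Iio η = Ioo a η := by
      ext t
      simp only [Set.mem_inter_iff, Set.mem_Ioc, Set.mem_Iio, Set.mem_Ioo]
      exact ⟨fun h => ⟨h.1.1, h.2⟩, fun h => ⟨⟨h.1, h.2.le.trans hη.2⟩, h.2⟩⟩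
    rw [h2, integral_Ioc_eq_integral_Ioo]
  rw [setIntegral_congr_fun measurableSet_Ioc hL]
  rw [MeasureTheory.integral_integral_swap hGint]
  exact setIntegral_congr_fun measurableSet_Ioc hR

lemma swap_tri (F : ℝ → ℝ → ℂ) (hF : Continuous (Function.uncurry F)) (a b : ℝ) :
    (∫ ξ in a..b, ∫ η in ξ..b, F ξ η) = ∫ η in a..b, ∫ ξ in a..η, F ξ η := by
  rcases le_total a b with hab | hab
  · exact swap_le F hF hab
  · have h := swap_le (fun ξ η => F η ξ) (by exact hF.comp continuous_swap) hab
    calc (∫ ξ in a..b, ∫ η in ξ..b, F ξ η)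
        = ∫ ξ in b..a, ∫ η in b..ξ, F ξ η := by
          rw [intervalIntegral.integral_symm]
          rw [← intervalIntegral.integral_neg]
          apply intervalIntegral.integral_congr
          intro ξ _
          show -∫ η in ξ..b, F ξ η = ∫ η in b..ξ, F ξ η
          exact (intervalIntegral.integral_symm ξ b).symm
      _ = ∫ η in b..a, ∫ ξ in η..a, F ξ η := h.symm
      _ = ∫ η in a..b, ∫ ξ in a..η, F ξ η := by
          rw [intervalIntegral.integral_symm a b]
          rw [← intervalIntegral.integral_neg]
          apply intervalIntegral.integral_congr
          intro η _
          show -∫ ξ in η..a, F ξ η = ∫ ξ in a..η, F ξ η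
          exact (intervalIntegral.integral_symm η a).symm

lemma neg_one_pow_eq_of_odd {j k : ℕ} (hj : Odd j) :
    ((-1 : ℤ)) ^ (j + k + 1) = (-1 : ℤ) ^ k := by
  obtain ⟨t, ht⟩ := hj
  subst ht
  have : 2 * t + 1 + k + 1 = k + 2 * (t + 1) := by ring
  rw [this, pow_add, pow_mul]
  norm_num

lemma key_lemma (Ψ : ℝ → ℂ) (hΨ : Continuous Ψ) (h0 : ∀ y, Ψ y ≠ 0)
    (j : ℕ) (hj : Odd j) (k : ℕ) : ∀ x₀ x : ℝ,
    (∫ ξ in x₀..x, Ψ ξ * genX Ψ j x₀ ξ * genX Ψ k ξ x)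
      = ((j.factorial : ℂ) * (k.factorial : ℂ) / ((j + k + 1).factorial : ℂ)) *
        genX Ψ (j + k + 1) x₀ x := by
  have hfac : ∀ N : ℕ, ((N.factorial : ℂ)) ≠ 0 :=
    fun N => Nat.cast_ne_zero.mpr (Nat.factorial_ne_zero N)
  induction k with
  | zero =>
    intro x₀ x
    have he : ((-1 : ℤ)) ^ (j + 0 + 1) = 1 := by
      simpa using neg_one_pow_eq_of_odd (k := 0) hj
    rw [genX_succ]
    simp only [genX_zero, mul_one, he, zpow_one]
    have h1 : (∫ ξ in x₀..x, Ψ ξ * genX Ψ j x₀ ξ)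
        = ∫ ξ in x₀..x, genX Ψ j x₀ ξ * Ψ ξ := by
      apply intervalIntegral.integral_congr
      intro ξ _
      ring
    rw [h1]
    have hN : (((j + 0 + 1).factorial : ℕ) : ℂ)
        = ((j + 0 + 1 : ℕ) : ℂ) * ((j.factorial : ℕ) : ℂ) := by
      rw [show j + 0 + 1 = j + 1 from rfl, Nat.factorial_succ]
      push_cast
      ring
    rw [hN, Nat.factorial_zero, ← mul_assoc]
    have hc : ((j.factorial : ℂ) * ((1 : ℕ) : ℂ) /
        (((j + 0 + 1 : ℕ) : ℂ) * ((j.factorial : ℕ) : ℂ))) * ((j + 0 + 1 : ℕ) : ℂ) = 1 := by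
      have h1 : ((j + 0 + 1 : ℕ) : ℂ) ≠ 0 := Nat.cast_ne_zero.mpr (by omega)
      field_simp
      rw [mul_comm]
      simp [hfac j]
    rw [hc, one_mul]
  | succ k ih =>
    intro x₀ x
    set e : ℤ := (-1 : ℤ) ^ (k + 1) with hedef
    have hee : ((-1 : ℤ)) ^ (j + (k + 1) + 1) = e := neg_one_pow_eq_of_odd hj
    -- the doubly-indexed integrand
    set F : ℝ → ℝ → ℂ := fun ξ η => Ψ ξ * genX Ψ j x₀ ξ * (genX Ψ k ξ η * Ψ η ^ e) with hFdef
    have hFc : Continuous (Function.uncurry F) := by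
      have hz : Continuous fun ξ : ℝ => Ψ ξ ^ e := hΨ.zpow₀ e (fun y => Or.inl (h0 y))
      apply Continuous.mul
      · apply Continuous.mul
        · exact hΨ.comp continuous_fst
        · exact (genX_continuous_s18 Ψ hΨ h0 j).comp
            ((continuous_const : Continuous fun _ : ℝ × ℝ => x₀).prodMk continuous_fst)
      · exact ((genX_continuous_s18 Ψ hΨ h0 k).comp
          (continuous_fst.prodMk continuous_snd)).mul (hz.comp continuous_snd)
    have step1 : ∀ ξ : ℝ, Ψ ξ * genX Ψ j x₀ ξ * genX Ψ (k + 1) ξ x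
        = ((k + 1 : ℕ) : ℂ) * ∫ η in ξ..x, F ξ η := by
      intro ξ
      rw [genX_succ, hFdef]
      simp only
      rw [intervalIntegral.integral_const_mul]
      ring
    rw [intervalIntegral.integral_congr (fun ξ _ => step1 ξ),
      intervalIntegral.integral_const_mul, swap_tri F hFc x₀ x]
    have step2 : ∀ η : ℝ, (∫ ξ in x₀..η, F ξ η)
        = ((j.factorial : ℂ) * (k.factorial : ℂ) / ((j + k + 1).factorial : ℂ)) *
          (genX Ψ (j + k + 1) x₀ η * Ψ η ^ e) := by
      intro η
      have h1 : (∫ ξ in x₀..η, F ξ η)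
          = Ψ η ^ e * ∫ ξ in x₀..η, Ψ ξ * genX Ψ j x₀ ξ * genX Ψ k ξ η := by
        rw [← intervalIntegral.integral_const_mul]
        apply intervalIntegral.integral_congr
        intro ξ _
        rw [hFdef]
        ring
      rw [h1, ih x₀ η]
      ring
    rw [intervalIntegral.integral_congr (fun η _ => step2 η)]
    have step3 : (∫ η in x₀..x, ((j.factorial : ℂ) * (k.factorial : ℂ) /
          ((j + k + 1).factorial : ℂ)) * (genX Ψ (j + k + 1) x₀ η * Ψ η ^ e))
        = ((j.factorial : ℂ) * (k.factorial : ℂ) / ((j + k + 1).factorial : ℂ)) *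
          ∫ η in x₀..x, genX Ψ (j + k + 1) x₀ η * Ψ η ^ e := by
      rw [intervalIntegral.integral_const_mul]
    rw [step3]
    have hX : genX Ψ (j + (k + 1) + 1) x₀ x
        = ((j + (k + 1) + 1 : ℕ) : ℂ) * ∫ η in x₀..x, genX Ψ (j + k + 1) x₀ η * Ψ η ^ e := by
      rw [show j + (k + 1) + 1 = (j + k + 1) + 1 from rfl, genX_succ]
      congr 1
      apply intervalIntegral.integral_congr
      intro η _
      rw [show (j + k + 1) + 1 = j + (k + 1) + 1 from rfl, hee]
    rw [hX]
    set V : ℂ := ∫ η in x₀..x, genX Ψ (j + k + 1) x₀ η * Ψ η ^ e with hV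
    have harith : ((k + 1 : ℕ) : ℂ) * ((j.factorial : ℂ) * (k.factorial : ℂ) /
          ((j + k + 1).factorial : ℂ))
        = ((j.factorial : ℂ) * ((k + 1).factorial : ℂ) / ((j + (k + 1) + 1).factorial : ℂ)) *
          ((j + (k + 1) + 1 : ℕ) : ℂ) := by
      have h1 : ((j + (k + 1) + 1).factorial : ℂ)
          = ((j + (k + 1) + 1 : ℕ) : ℂ) * ((j + k + 1).factorial : ℂ) := by
        rw [show j + (k + 1) + 1 = (j + k + 1) + 1 from rfl, Nat.factorial_succ]
        push_cast
        ring
      have h2 : (((k + 1).factorial : ℕ) : ℂ) = ((k + 1 : ℕ) : ℂ) * (k.factorial : ℂ) := by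
        rw [Nat.factorial_succ]
        push_cast
        ring
      have h3 : ((j + (k + 1) + 1 : ℕ) : ℂ) ≠ 0 := Nat.cast_ne_zero.mpr (by omega)
      have hD : (((j + k + 1).factorial : ℕ) : ℂ) ≠ 0 := hfac _
      rw [h1, h2, div_mul_eq_mul_div, eq_div_iff (mul_ne_zero h3 hD)]
      field_simp [hD]
    calc ((k + 1 : ℕ) : ℂ) * (((j.factorial : ℂ) * (k.factorial : ℂ) /
            ((j + k + 1).factorial : ℂ)) * V)
        = (((k + 1 : ℕ) : ℂ) * ((j.factorial : ℂ) * (k.factorial : ℂ) /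
            ((j + k + 1).factorial : ℂ))) * V := by ring
      _ = (((j.factorial : ℂ) * ((k + 1).factorial : ℂ) / ((j + (k + 1) + 1).factorial : ℂ)) *
            ((j + (k + 1) + 1 : ℕ) : ℂ)) * V := by rw [harith]
      _ = ((j.factorial : ℂ) * ((k + 1).factorial : ℂ) / ((j + (k + 1) + 1).factorial : ℂ)) *
            (((j + (k + 1) + 1 : ℕ) : ℂ) * V) := by ring

theorem stmt_18 (a b : ℝ) (Φ : ℝ → ℂ) (hΦc : ContinuousOn Φ (Set.Icc a b))
    (hΦ0 : ∀ y ∈ Set.Icc a b, Φ y ≠ 0) (n m : ℕ) (hn : 1 ≤ n) (hm : 1 ≤ m)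
    (x₀ x : ℝ) (hx₀ : x₀ ∈ Set.Icc a b) (hx : x ∈ Set.Icc a b) :
    volt (fun u v => Φ v * genX Φ (2 * n - 1) u v) (genX Φ (2 * m)) x₀ x =
      (((2 * n - 1).factorial : ℂ) * ((2 * m).factorial : ℂ) /
        ((2 * n + 2 * m).factorial : ℂ)) * genX Φ (2 * n + 2 * m) x₀ x ∧
    volt (fun u v => Φ v * genX Φ (2 * n - 1) u v) (genX Φ (2 * m - 1)) x₀ x =
      (((2 * n - 1).factorial : ℂ) * ((2 * m - 1).factorial : ℂ) /
        ((2 * n + 2 * m - 1).factorial : ℂ)) * genX Φ (2 * n + 2 * m - 1) x₀ x := by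
  have hab : a ≤ b := hx₀.1.trans hx₀.2
  set c : ℝ → ℝ := fun y => max a (min b y) with hc
  have hcmem : ∀ y, c y ∈ Set.Icc a b :=
    fun y => ⟨le_max_left _ _, max_le hab (min_le_left _ _)⟩
  have hceq : ∀ y ∈ Set.Icc a b, c y = y := by
    intro y hy
    rw [hc]
    simp only
    rw [min_eq_right hy.2, max_eq_right hy.1]
  set Ψ : ℝ → ℂ := fun y => Φ (c y) with hΨdef
  have hΨc : Continuous Ψ := by
    apply hΦc.comp_continuous _ hcmem
    fun_prop
  have hΨ0 : ∀ y, Ψ y ≠ 0 := fun y => hΦ0 _ (hcmem y)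
  have hΨΦ : ∀ y ∈ Set.Icc a b, Ψ y = Φ y := by
    intro y hy
    rw [hΨdef]
    simp only
    rw [hceq y hy]
  -- genX Φ agrees with genX Ψ on Icc a b
  have hgen : ∀ N : ℕ, ∀ u ∈ Set.Icc a b, ∀ v ∈ Set.Icc a b,
      genX Φ N u v = genX Ψ N u v := by
    intro N
    induction N with
    | zero => intro u _ v _; rfl
    | succ N ih =>
      intro u hu v hv
      rw [genX_succ, genX_succ]
      congr 1
      apply intervalIntegral.integral_congr
      intro ξ hξ
      have hξ' : ξ ∈ Set.Icc a b := (Set.uIcc_subset_Icc hu hv) hξ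
      beta_reduce
      rw [ih u hu ξ hξ', hΨΦ ξ hξ']
  have hsub : Set.uIcc x₀ x ⊆ Set.Icc a b := Set.uIcc_subset_Icc hx₀ hx
  have hodd : Odd (2 * n - 1) := ⟨n - 1, by omega⟩
  have main : ∀ k : ℕ,
      volt (fun u v => Φ v * genX Φ (2 * n - 1) u v) (genX Φ k) x₀ x =
        (((2 * n - 1).factorial : ℂ) * (k.factorial : ℂ) /
          (((2 * n - 1) + k + 1).factorial : ℂ)) * genX Φ ((2 * n - 1) + k + 1) x₀ x := by
    intro k
    unfold volt
    have hcongr : (∫ ξ in x₀..x, (Φ ξ * genX Φ (2 * n - 1) x₀ ξ) * genX Φ k ξ x)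
        = ∫ ξ in x₀..x, Ψ ξ * genX Ψ (2 * n - 1) x₀ ξ * genX Ψ k ξ x := by
      apply intervalIntegral.integral_congr
      intro ξ hξ
      have hξ' : ξ ∈ Set.Icc a b := hsub hξ
      beta_reduce
      rw [hΨΦ ξ hξ', hgen (2 * n - 1) x₀ hx₀ ξ hξ', hgen k ξ hξ' x hx]
    rw [hcongr, key_lemma Ψ hΨc hΨ0 (2 * n - 1) hodd k x₀ x,
      hgen ((2 * n - 1) + k + 1) x₀ hx₀ x hx]
  constructor
  · have h := main (2 * m)
    rw [show (2 * n - 1) + 2 * m + 1 = 2 * n + 2 * m by omega] at h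
    exact h
  · have h := main (2 * m - 1)
    rw [show (2 * n - 1) + (2 * m - 1) + 1 = 2 * n + 2 * m - 1 by omega] at h
    exact h
end
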